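/- Every separable state of a two-qubit system can be obtained from the product of maximal imaginary states by real operations: if ρ = Σᵢ pᵢ σᵢ ⊗ τᵢ, where pᵢ ≥ 0, Σᵢ pᵢ = 1, and each σᵢ, τᵢ is a 2×2 density matrix, then there exist, for each i, finite families of 2×2 complex matrices {Kₘ^{(i)}}ₘ and {Lₙ^{(i)}}ₙ with all real entries satisfying Σₘ (Kₘ^{(i)})†Kₘ^{(i)} = I and Σₙ (Lₙ^{(i)})†Lₙ^{(i)} = I, such that ρ = Σᵢ pᵢ Σₘ,ₙ (Kₘ^{(i)} ⊗ Lₙ^{(i)}) (M₊ ⊗ M₊) (Kₘ^{(i)} ⊗ Lₙ^{(i)})†, where M₊ = (1/2)[[1, −i],[i, 1]]. -/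

import Mathlib

open Matrix Kronecker BigOperators
open scoped ComplexOrder

noncomputable section
set_option maxHeartbeats 1000000

/-- A density matrix: positive semidefinite with trace 1. -/
def IsDensityMatrix {n : Type*} [Fintype n] [DecidableEq n] (ρ : Matrix n n ℂ) : Prop :=
  ρ.PosSemidef ∧ ρ.trace = 1

/-- The l₁-norm imaginarity measure: sum of |Im ρᵢⱼ| over off-diagonal entries. -/
noncomputable def Fl1 {n : Type*} [Fintype n] [DecidableEq n] (ρ : Matrix n n ℂ) : ℝ :=
  ∑ i, ∑ j, if i = j then 0 else |(ρ i j).im|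

/-- The trace norm ‖M‖₁ = Tr √(M†M). -/
noncomputable def traceNorm {n : Type*} [Fintype n] [DecidableEq n] (M : Matrix n n ℂ) : ℝ :=
  (((Matrix.posSemidef_conjTranspose_mul_self M).1.eigenvectorUnitary.1 *
    diagonal (((↑) : ℝ → ℂ) ∘ Real.sqrt ∘ (Matrix.posSemidef_conjTranspose_mul_self M).1.eigenvalues) *
    (star (Matrix.posSemidef_conjTranspose_mul_self M).1.eigenvectorUnitary : Matrix n n ℂ)).trace).re

/-- The robustness of imaginarity: (1/2)‖ρ − ρᵀ‖₁. -/
noncomputable def FR {n : Type*} [Fintype n] [DecidableEq n] (ρ : Matrix n n ℂ) : ℝ :=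
  traceNorm (ρ - ρᵀ) / 2

/-- Von Neumann entropy (base-2), via eigenvalues of a Hermitian matrix
(junk value 0 if not Hermitian). -/
noncomputable def vnEntropy {n : Type*} [Fintype n] [DecidableEq n] (σ : Matrix n n ℂ) : ℝ :=
  if h : σ.IsHermitian then -∑ j, (h.eigenvalues j) * Real.logb 2 (h.eigenvalues j) else 0

/-- The relative entropy of imaginarity: S(Re ρ) − S(ρ), Re ρ = (ρ + ρᵀ)/2. -/
noncomputable def Fr {n : Type*} [Fintype n] [DecidableEq n] (ρ : Matrix n n ℂ) : ℝ :=
  vnEntropy ((1/2 : ℂ) • (ρ + ρᵀ)) - vnEntropy ρ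

/-- The canonical single-qubit state ρ_A. -/
noncomputable def rhoA (A : ℝ) : Matrix (Fin 2) (Fin 2) ℂ :=
  !![(((1 + A) / 2 : ℝ) : ℂ), -(Complex.I / 2) * (Real.sqrt (1 - A ^ 2) : ℂ);
     (Complex.I / 2) * (Real.sqrt (1 - A ^ 2) : ℂ), (((1 - A) / 2 : ℝ) : ℂ)]

/-- Density matrix of the maximal imaginary state |+⟩ = (|0⟩ + i|1⟩)/√2. -/
noncomputable def Mplus : Matrix (Fin 2) (Fin 2) ℂ :=
  (1/2 : ℂ) • !![1, -Complex.I; Complex.I, 1]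

/-- Real matrix with rows (Re u, Im u) and (Re v, Im v); it maps |+⟩ to (u, v). -/
noncomputable def Kr (u v : ℂ) : Matrix (Fin 2) (Fin 2) ℂ :=
  !![(u.re : ℂ), (u.im : ℂ); (v.re : ℂ), (v.im : ℂ)]

lemma Kr_im (u v : ℂ) (a b : Fin 2) : (Kr u v a b).im = 0 := by
  fin_cases a <;> fin_cases b <;> simp [Kr]

lemma Apair (u v : ℂ) :
    (Kr u v)ᴴ * (Kr u v) + (Kr (Complex.I * u) (Complex.I * v))ᴴ * Kr (Complex.I * u) (Complex.I * v)
      = ((Complex.normSq u + Complex.normSq v : ℝ) : ℂ) • 1 := by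
  rw [← Matrix.ext_iff]
  simp only [Fin.forall_fin_two, Kr, Matrix.add_apply, Matrix.mul_apply, Fin.sum_univ_two,
    Matrix.conjTranspose_apply, Matrix.cons_val_zero, Matrix.cons_val_one, Matrix.head_cons,
    Matrix.head_fin_const, Matrix.smul_apply, Matrix.one_apply, smul_eq_mul,
    Complex.ext_iff, Complex.mul_re, Complex.mul_im, Complex.normSq_apply,
    Complex.conj_re, Complex.conj_im, Complex.ofReal_re, Complex.ofReal_im]
  norm_num
  refine ⟨⟨by ring, by ring⟩, by ring, by ring⟩

lemma Bpair (u v : ℂ) :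
    Kr u v * Mplus * (Kr u v)ᴴ
      + Kr (Complex.I * u) (Complex.I * v) * Mplus * (Kr (Complex.I * u) (Complex.I * v))ᴴ
      = !![u * (starRingEnd ℂ) u, u * (starRingEnd ℂ) v;
           v * (starRingEnd ℂ) u, v * (starRingEnd ℂ) v] := by
  rw [← Matrix.ext_iff]
  simp only [Fin.forall_fin_two, Kr, Mplus, Matrix.of_apply, Matrix.cons_val',
    Matrix.empty_val', Matrix.cons_val_fin_one, Matrix.add_apply, Matrix.mul_apply,
    Fin.sum_univ_two, Matrix.conjTranspose_apply, Matrix.cons_val_zero, Matrix.cons_val_one,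
    Matrix.head_cons, Matrix.head_fin_const, Matrix.smul_apply, smul_eq_mul,
    Complex.ext_iff, Complex.mul_re, Complex.mul_im,
    Complex.conj_re, Complex.conj_im, Complex.ofReal_re, Complex.ofReal_im,
    Complex.I_re, Complex.I_im, Complex.one_re, Complex.one_im, Complex.neg_re, Complex.neg_im,
    Complex.div_re, Complex.div_im, Complex.normSq_apply]
  norm_num
  and_intros <;> ring

/-- Kraus operators realizing a density matrix from `Mplus`, built from `B = √σ`. -/
noncomputable def krausOf (B : Matrix (Fin 2) (Fin 2) ℂ) : Fin 4 → Matrix (Fin 2) (Fin 2) ℂ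
  | 0 => Kr (B 0 0) (B 1 0)
  | 1 => Kr (Complex.I * B 0 0) (Complex.I * B 1 0)
  | 2 => Kr (B 0 1) (B 1 1)
  | 3 => Kr (Complex.I * B 0 1) (Complex.I * B 1 1)

lemma krausOf_im (B : Matrix (Fin 2) (Fin 2) ℂ) (t : Fin 4) (a b : Fin 2) :
    (krausOf B t a b).im = 0 := by
  fin_cases t <;> exact Kr_im _ _ a b

/-- Square root of a positive semidefinite matrix via its spectral decomposition. -/
noncomputable def psdSqrt {σ : Matrix (Fin 2) (Fin 2) ℂ} (h : σ.PosSemidef) :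
    Matrix (Fin 2) (Fin 2) ℂ :=
  h.1.eigenvectorUnitary.1 * diagonal (((↑) : ℝ → ℂ) ∘ Real.sqrt ∘ h.1.eigenvalues) *
    (star h.1.eigenvectorUnitary : Matrix (Fin 2) (Fin 2) ℂ)

lemma psdSqrt_herm {σ : Matrix (Fin 2) (Fin 2) ℂ} (h : σ.PosSemidef) :
    (psdSqrt h)ᴴ = psdSqrt h := by
  have hd : (diagonal (((↑) : ℝ → ℂ) ∘ Real.sqrt ∘ h.1.eigenvalues))ᴴ
      = diagonal (((↑) : ℝ → ℂ) ∘ Real.sqrt ∘ h.1.eigenvalues) := by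
    rw [Matrix.diagonal_conjTranspose]
    congr 1
    funext i
    simp
  unfold psdSqrt
  simp only [Unitary.coe_star, Matrix.star_eq_conjTranspose, Matrix.conjTranspose_mul,
    Matrix.conjTranspose_conjTranspose, hd, Matrix.mul_assoc]

lemma psdSqrt_mul_self {σ : Matrix (Fin 2) (Fin 2) ℂ} (h : σ.PosSemidef) :
    psdSqrt h * psdSqrt h = σ := by
  have hU : (star h.1.eigenvectorUnitary : Matrix (Fin 2) (Fin 2) ℂ) * h.1.eigenvectorUnitary.1 = 1 :=
    Unitary.coe_star_mul_self _
  have hD : diagonal (((↑) : ℝ → ℂ) ∘ Real.sqrt ∘ h.1.eigenvalues)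
      * diagonal (((↑) : ℝ → ℂ) ∘ Real.sqrt ∘ h.1.eigenvalues)
      = diagonal (RCLike.ofReal ∘ h.1.eigenvalues) := by
    rw [Matrix.diagonal_mul_diagonal]
    congr 1
    funext i
    simp only [Function.comp_apply]
    rw [← Complex.ofReal_mul, Real.mul_self_sqrt (h.eigenvalues_nonneg i)]
    rfl
  conv_rhs => rw [h.1.spectral_theorem, Unitary.conjStarAlgAut_apply]
  calc psdSqrt h * psdSqrt h
      = h.1.eigenvectorUnitary.1 * (diagonal (((↑) : ℝ → ℂ) ∘ Real.sqrt ∘ h.1.eigenvalues) *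
        ((star h.1.eigenvectorUnitary : Matrix (Fin 2) (Fin 2) ℂ) * h.1.eigenvectorUnitary.1) *
        diagonal (((↑) : ℝ → ℂ) ∘ Real.sqrt ∘ h.1.eigenvalues)) *
        (star h.1.eigenvectorUnitary : Matrix (Fin 2) (Fin 2) ℂ) := by
        simp only [psdSqrt, mul_assoc]
    _ = _ := by rw [hU, Matrix.mul_one, hD]

lemma single_qubit (σ : Matrix (Fin 2) (Fin 2) ℂ) (h : IsDensityMatrix σ) :
    ((∑ t, (krausOf (psdSqrt h.1) t)ᴴ * krausOf (psdSqrt h.1) t) = 1) ∧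
    ((∑ t, krausOf (psdSqrt h.1) t * Mplus * (krausOf (psdSqrt h.1) t)ᴴ) = σ) := by
  set B := psdSqrt h.1 with hB
  have hherm : Bᴴ = B := psdSqrt_herm h.1
  have hmul : B * B = σ := psdSqrt_mul_self h.1
  have hσBB : σ = B * Bᴴ := by rw [hherm, hmul]
  have htr : Complex.normSq (B 0 0) + Complex.normSq (B 1 0)
      + (Complex.normSq (B 0 1) + Complex.normSq (B 1 1)) = 1 := by
    have h2 := h.2
    rw [hσBB] at h2
    have := congrArg Complex.re h2
    simp only [Matrix.trace, Matrix.mul_apply, Fin.sum_univ_two, Matrix.conjTranspose_apply,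
      Matrix.diag_apply, Complex.add_re, Complex.mul_re, Complex.star_def, Complex.conj_re,
      Complex.conj_im, Complex.one_re] at this
    simp only [Complex.normSq_apply]
    linarith

  constructor
  · rw [Fin.sum_univ_four]
    show (Kr (B 0 0) (B 1 0))ᴴ * Kr (B 0 0) (B 1 0)
        + (Kr (Complex.I * B 0 0) (Complex.I * B 1 0))ᴴ * Kr (Complex.I * B 0 0) (Complex.I * B 1 0)
        + (Kr (B 0 1) (B 1 1))ᴴ * Kr (B 0 1) (B 1 1)
        + (Kr (Complex.I * B 0 1) (Complex.I * B 1 1))ᴴ * Kr (Complex.I * B 0 1) (Complex.I * B 1 1)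
        = 1
    rw [Apair, add_assoc, Apair, ← add_smul, ← Complex.ofReal_add, htr]
    simp
  · rw [Fin.sum_univ_four]
    show Kr (B 0 0) (B 1 0) * Mplus * (Kr (B 0 0) (B 1 0))ᴴ
        + Kr (Complex.I * B 0 0) (Complex.I * B 1 0) * Mplus * (Kr (Complex.I * B 0 0) (Complex.I * B 1 0))ᴴ
        + Kr (B 0 1) (B 1 1) * Mplus * (Kr (B 0 1) (B 1 1))ᴴ
        + Kr (Complex.I * B 0 1) (Complex.I * B 1 1) * Mplus * (Kr (Complex.I * B 0 1) (Complex.I * B 1 1))ᴴ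
        = σ
    rw [Bpair, add_assoc, Bpair, hσBB]
    rw [← Matrix.ext_iff]
    simp only [Fin.forall_fin_two, Matrix.add_apply, Matrix.mul_apply, Fin.sum_univ_two,
      Matrix.conjTranspose_apply, Matrix.of_apply, Matrix.cons_val', Matrix.empty_val',
      Matrix.cons_val_fin_one, Matrix.cons_val_zero, Matrix.cons_val_one, Matrix.head_cons,
      Matrix.head_fin_const, Complex.star_def]
    and_intros <;> trivial

lemma kron_conjTranspose {l m n p : Type*} [Fintype m] [Fintype p]
    (A : Matrix l m ℂ) (B : Matrix n p ℂ) : (A ⊗ₖ B)ᴴ = Aᴴ ⊗ₖ Bᴴ := by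
  ext ⟨i, j⟩ ⟨k, l⟩
  simp [Matrix.conjTranspose_apply, Matrix.kroneckerMap_apply, mul_comm]

lemma kron_sum_sum {M N : ℕ} (A : Fin M → Matrix (Fin 2) (Fin 2) ℂ)
    (B : Fin N → Matrix (Fin 2) (Fin 2) ℂ) :
    ∑ m, ∑ n, (A m ⊗ₖ B n) = (∑ m, A m) ⊗ₖ (∑ n, B n) := by
  ext ⟨i, j⟩ ⟨k, l⟩
  simp only [Matrix.sum_apply, Matrix.kroneckerMap_apply]
  rw [Finset.sum_mul_sum]

/-- every separable two-qubit state is obtained from M₊ ⊗ M₊ by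
(mixtures of) tensor products of real operations. -/
theorem separable_from_maximal_imaginary (s : ℕ) (p : Fin s → ℝ)
    (σ τ : Fin s → Matrix (Fin 2) (Fin 2) ℂ)
    (hp : ∀ i, 0 ≤ p i) (hpsum : (∑ i, p i) = 1)
    (hσ : ∀ i, IsDensityMatrix (σ i)) (hτ : ∀ i, IsDensityMatrix (τ i)) :
    ∃ (NK NL : Fin s → ℕ)
      (K : ∀ i, Fin (NK i) → Matrix (Fin 2) (Fin 2) ℂ)
      (L : ∀ i, Fin (NL i) → Matrix (Fin 2) (Fin 2) ℂ),
      (∀ i m a b, (K i m a b).im = 0) ∧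
      (∀ i n a b, (L i n a b).im = 0) ∧
      (∀ i, (∑ m, (K i m)ᴴ * K i m) = 1) ∧
      (∀ i, (∑ n, (L i n)ᴴ * L i n) = 1) ∧
      (∑ i, (p i : ℂ) • (σ i ⊗ₖ τ i))
        = ∑ i, (p i : ℂ) •
            ∑ m, ∑ n, (K i m ⊗ₖ L i n) * (Mplus ⊗ₖ Mplus) * (K i m ⊗ₖ L i n)ᴴ := by
  refine ⟨fun _ => 4, fun _ => 4, fun i => krausOf (psdSqrt (hσ i).1), fun i => krausOf (psdSqrt (hτ i).1),
    fun i m a b => krausOf_im _ m a b, fun i n a b => krausOf_im _ n a b,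
    fun i => (single_qubit (σ i) (hσ i)).1, fun i => (single_qubit (τ i) (hτ i)).1, ?_⟩
  refine Finset.sum_congr rfl fun i _ => ?_
  congr 1
  have : ∀ (m n : Fin 4),
      (krausOf (psdSqrt (hσ i).1) m ⊗ₖ krausOf (psdSqrt (hτ i).1) n) * (Mplus ⊗ₖ Mplus)
        * (krausOf (psdSqrt (hσ i).1) m ⊗ₖ krausOf (psdSqrt (hτ i).1) n)ᴴ
      = (krausOf (psdSqrt (hσ i).1) m * Mplus * (krausOf (psdSqrt (hσ i).1) m)ᴴ)
        ⊗ₖ (krausOf (psdSqrt (hτ i).1) n * Mplus * (krausOf (psdSqrt (hτ i).1) n)ᴴ) := by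
    intro m n
    rw [kron_conjTranspose, ← Matrix.mul_kronecker_mul, ← Matrix.mul_kronecker_mul]
  calc σ i ⊗ₖ τ i
      = (∑ m, krausOf (psdSqrt (hσ i).1) m * Mplus * (krausOf (psdSqrt (hσ i).1) m)ᴴ)
        ⊗ₖ (∑ n, krausOf (psdSqrt (hτ i).1) n * Mplus * (krausOf (psdSqrt (hτ i).1) n)ᴴ) := by
        rw [(single_qubit (σ i) (hσ i)).2, (single_qubit (τ i) (hτ i)).2]
    _ = _ := by
        rw [← kron_sum_sum]
        exact Finset.sum_congr rfl fun m _ => Finset.sum_congr rfl fun n _ => (this m n).symm
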